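/- On ℝ⁶ with source coordinates (x, y, a, b, c, κ) and target coordinates (x, z₀, z₁, z₂, z₃, z₄), let φ(x, y, a, b, c, κ) = (x, y, c/a, a^(−3), −3·b·a^(−5), 3·(5·b² − a²·κ)·a^(−7)), let Z(p) = (1, c/a, b/a, κ, (1+b·c)/a², 0), and let e₆ = (0, 0, 0, 0, 0, 1). For q = (q₁, …, q₆) ∈ ℝ⁶ define the contact plane C(q) = span{(1, q₃, q₄, q₅, q₆, 0), e₆} ⊆ ℝ⁶. Then for every point p with a ≠ 0, the Fréchet derivative Dφ(p) maps the two-dimensional subspace span{Z(p), e₆} of ℝ⁶ onto the contact plane C(φ(p)); in particular Dφ(p)[e₆] = −3·a^(−5)·e₆ and the first five components of Dφ(p)[Z(p)] are (1, c/a, a^(−3), −3·b·a^(−5), 3·(5·b² − a²·κ)·a^(−7)). -/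

import Mathlib

/-- The local equivalence `φ`, with source coordinates
`(x, y, a, b, c, κ) = (p 0, …, p 5)`. -/
noncomputable def phiMap (p : Fin 6 → ℝ) : Fin 6 → ℝ :=
  ![p 0, p 1, p 4 / p 2, (p 2) ^ (-(3 : ℤ)), -3 * p 3 * (p 2) ^ (-(5 : ℤ)),
    3 * (5 * (p 3) ^ 2 - (p 2) ^ 2 * p 5) * (p 2) ^ (-(7 : ℤ))]

/-- The total differential operator `Z`. -/
noncomputable def Zvf (p : Fin 6 → ℝ) : Fin 6 → ℝ :=
  ![1, p 4 / p 2, p 3 / p 2, p 5, (1 + p 3 * p 4) / (p 2) ^ 2, 0]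

/-- The sixth coordinate vector `e₆ = (0,0,0,0,0,1)`. -/
def e6 : Fin 6 → ℝ := ![0, 0, 0, 0, 0, 1]

/-- The fiber of the contact distribution of `J⁴(ℝ,ℝ)` at the point `q`. -/
def contactPlane (q : Fin 6 → ℝ) : Submodule ℝ (Fin 6 → ℝ) :=
  Submodule.span ℝ {![1, q 2, q 3, q 4, q 5, 0], e6}

open ContinuousLinearMap in
/-- The (components of the) Fréchet derivative of `phiMap` at `p`. -/
noncomputable def Dphi (p : Fin 6 → ℝ) : Fin 6 → ((Fin 6 → ℝ) →L[ℝ] ℝ) :=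
  ![proj 0, proj 1,
    p 4 • ((((-1:ℤ):ℝ) * (p 2) ^ (-(1:ℤ) - 1)) • proj 2) + ((p 2) ^ (-(1:ℤ))) • proj 4,
    (((-3:ℤ):ℝ) * (p 2) ^ (-(3:ℤ) - 1)) • proj 2,
    (-3 * p 3) • ((((-5:ℤ):ℝ) * (p 2) ^ (-(5:ℤ) - 1)) • proj 2) +
      ((p 2) ^ (-(5:ℤ))) • ((-3:ℝ) • proj 3),
    (3 * (5 * (p 3) ^ 2 - (p 2) ^ 2 * p 5)) • ((((-7:ℤ):ℝ) * (p 2) ^ (-(7:ℤ) - 1)) • proj 2) +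
      ((p 2) ^ (-(7:ℤ))) • ((3:ℝ) • (((5:ℝ) • ((((2:ℕ):ℝ) * (p 3) ^ (2 - 1)) • proj 3)) -
        ((p 2) ^ 2 • proj 5 + p 5 • ((((2:ℕ):ℝ) * (p 2) ^ (2 - 1)) • proj 2))))]

open ContinuousLinearMap in
lemma hasFDerivAt_phiMap (p : Fin 6 → ℝ) (hp : p 2 ≠ 0) :
    HasFDerivAt phiMap (ContinuousLinearMap.pi (Dphi p)) p := by
  have hz : ∀ n : ℤ, HasFDerivAt (fun q : Fin 6 → ℝ => (q 2) ^ n)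
      (((n : ℝ) * (p 2) ^ (n - 1)) • (proj 2 : (Fin 6 → ℝ) →L[ℝ] ℝ)) p := fun n => by
    have h1 := hasDerivAt_zpow n (p 2) (Or.inl hp)
    have h2 : HasFDerivAt (fun q : Fin 6 → ℝ => q 2) (proj 2 : (Fin 6 → ℝ) →L[ℝ] ℝ) p :=
      hasFDerivAt_apply 2 p
    exact h1.comp_hasFDerivAt p h2
  have h2 : HasFDerivAt (fun q : Fin 6 → ℝ => q 4 / q 2) (Dphi p 2) p := by
    have e2 : (fun q : Fin 6 → ℝ => q 4 / q 2)
        = (fun q : Fin 6 → ℝ => q 4 * (q 2) ^ (-(1:ℤ))) := by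
      funext q; rw [zpow_neg, zpow_one, div_eq_mul_inv]
    rw [e2]
    exact (hasFDerivAt_apply 4 p).mul
      (hz (-1))
  have h3 : HasFDerivAt (fun q : Fin 6 → ℝ => (q 2) ^ (-(3:ℤ))) (Dphi p 3) p :=
    hz (-3)
  have h4 : HasFDerivAt (fun q : Fin 6 → ℝ => -3 * q 3 * (q 2) ^ (-(5:ℤ))) (Dphi p 4) p :=
    ((hasFDerivAt_apply 3 p).const_mul (-3)).mul
      (hz (-5))
  have h5 : HasFDerivAt
      (fun q : Fin 6 → ℝ => 3 * (5 * (q 3) ^ 2 - (q 2) ^ 2 * q 5) * (q 2) ^ (-(7:ℤ)))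
      (Dphi p 5) p :=
    (((((hasDerivAt_pow 2 (p 3)).comp_hasFDerivAt p (hasFDerivAt_apply 3 p)).const_mul
        (5:ℝ)).sub
      (((hasDerivAt_pow 2 (p 2)).comp_hasFDerivAt p (hasFDerivAt_apply 2 p)).mul
        (hasFDerivAt_apply 5 p))).const_mul (3:ℝ)).mul
      (hz (-7))
  refine hasFDerivAt_pi'.2 fun i => ?_
  rw [ContinuousLinearMap.proj_pi]
  fin_cases i
  · exact hasFDerivAt_apply 0 p
  · exact hasFDerivAt_apply 1 p
  · exact h2
  · exact h3
  · exact h4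
  · exact h5

lemma span_pair_shear (v e : Fin 6 → ℝ) (w c : ℝ) (hc : c ≠ 0) :
    Submodule.span ℝ {v + w • e, c • e} = Submodule.span ℝ {v, e} := by
  have he : e ∈ Submodule.span ℝ ({v + w • e, c • e} : Set (Fin 6 → ℝ)) := by
    have h1 : c • e ∈ Submodule.span ℝ ({v + w • e, c • e} : Set (Fin 6 → ℝ)) :=
      Submodule.subset_span (Set.mem_insert_of_mem _ rfl)
    have h2 := Submodule.smul_mem _ c⁻¹ h1
    rwa [smul_smul, inv_mul_cancel₀ hc, one_smul] at h2
  have hv : v ∈ Submodule.span ℝ ({v + w • e, c • e} : Set (Fin 6 → ℝ)) := by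
    have h1 : v + w • e ∈ Submodule.span ℝ ({v + w • e, c • e} : Set (Fin 6 → ℝ)) :=
      Submodule.subset_span (Set.mem_insert _ _)
    have h2 := Submodule.sub_mem _ h1 (Submodule.smul_mem _ w he)
    simpa using h2
  apply le_antisymm
  · rw [Submodule.span_le]; rintro x (rfl | rfl)
    · exact Submodule.add_mem _ (Submodule.subset_span (Set.mem_insert _ _))
        (Submodule.smul_mem _ _ (Submodule.subset_span (Set.mem_insert_of_mem _ rfl)))
    · exact Submodule.smul_mem _ _ (Submodule.subset_span (Set.mem_insert_of_mem _ rfl))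
  · rw [Submodule.span_le]; rintro x (rfl | rfl)
    · exact hv
    · exact he

set_option maxHeartbeats 2000000 in
/-- `Dφ(p)` maps `span{Z(p), e₆}` onto the contact plane at `φ(p)`; in
particular `Dφ(p)[e₆] = -3 a⁻⁵ e₆`, and the first five components of
`Dφ(p)[Z(p)]` are `(1, c/a, a⁻³, -3 b a⁻⁵, 3(5b² - a²κ)a⁻⁷)`. -/
theorem phi_maps_cartan_distribution_to_contact (p : Fin 6 → ℝ) (hp : p 2 ≠ 0) :
    Submodule.map (fderiv ℝ phiMap p : (Fin 6 → ℝ) →ₗ[ℝ] (Fin 6 → ℝ)) (Submodule.span ℝ {Zvf p, e6}) =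
      contactPlane (phiMap p) ∧
    fderiv ℝ phiMap p e6 = (-3 * (p 2) ^ (-(5 : ℤ))) • e6 ∧
    fderiv ℝ phiMap p (Zvf p) 0 = 1 ∧
    fderiv ℝ phiMap p (Zvf p) 1 = p 4 / p 2 ∧
    fderiv ℝ phiMap p (Zvf p) 2 = (p 2) ^ (-(3 : ℤ)) ∧
    fderiv ℝ phiMap p (Zvf p) 3 = -3 * p 3 * (p 2) ^ (-(5 : ℤ)) ∧
    fderiv ℝ phiMap p (Zvf p) 4 =
      3 * (5 * (p 3) ^ 2 - (p 2) ^ 2 * p 5) * (p 2) ^ (-(7 : ℤ)) := by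
  have H := (hasFDerivAt_phiMap p hp).fderiv
  rw [H]
  set L := ContinuousLinearMap.pi (Dphi p) with hLdef
  have h5succ : (5 : Fin 6) = Fin.succ 4 := rfl
  have hZ0 : L (Zvf p) 0 = 1 := by
    simp [hLdef, ContinuousLinearMap.pi_apply, Dphi, Zvf]
  have hZ1 : L (Zvf p) 1 = p 4 / p 2 := by
    simp [hLdef, ContinuousLinearMap.pi_apply, Dphi, Zvf]
  have hZ2 : L (Zvf p) 2 = (p 2) ^ (-(3:ℤ)) := by
    norm_num [hLdef, ContinuousLinearMap.pi_apply, Dphi, Zvf, zpow_neg, zpow_ofNat, Matrix.cons_val_two, Matrix.cons_val_three, Matrix.cons_val_four]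
    field_simp
    ring
  have hZ3 : L (Zvf p) 3 = -3 * p 3 * (p 2) ^ (-(5:ℤ)) := by
    norm_num [hLdef, ContinuousLinearMap.pi_apply, Dphi, Zvf, zpow_neg, zpow_ofNat, Matrix.cons_val_two, Matrix.cons_val_three, Matrix.cons_val_four]
    field_simp
    try ring
    try exact Or.inl trivial
  have hZ4 : L (Zvf p) 4 = 3 * (5 * (p 3) ^ 2 - (p 2) ^ 2 * p 5) * (p 2) ^ (-(7:ℤ)) := by
    norm_num [hLdef, ContinuousLinearMap.pi_apply, Dphi, Zvf, zpow_neg, zpow_ofNat, h5succ, Matrix.cons_val_two, Matrix.cons_val_three, Matrix.cons_val_four]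
    field_simp
    ring
  have hE : L e6 = (-3 * (p 2) ^ (-(5 : ℤ))) • e6 := by
    funext i
    rw [hLdef, ContinuousLinearMap.pi_apply]
    fin_cases i <;>
      norm_num [Dphi, e6, h5succ, zpow_neg, zpow_ofNat, Matrix.cons_val_two, Matrix.cons_val_three, Matrix.cons_val_four,
        show (![0, 0, 0, 0, 0, (1:ℝ)]) 5 = 1 from rfl] <;> field_simp <;> ring
  refine ⟨?_, hE, hZ0, hZ1, hZ2, hZ3, hZ4⟩
  set w := L (Zvf p) 5 with hw
  set V : Fin 6 → ℝ := ![1, p 4 / p 2, (p 2) ^ (-(3:ℤ)), -3 * p 3 * (p 2) ^ (-(5:ℤ)),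
    3 * (5 * (p 3) ^ 2 - (p 2) ^ 2 * p 5) * (p 2) ^ (-(7:ℤ)), 0] with hV
  have hLZ : L (Zvf p) = V + w • e6 := by
    funext i
    fin_cases i
    · simpa [hV, e6] using hZ0
    · simpa [hV, e6] using hZ1
    · simpa [hV, e6] using hZ2
    · simpa [hV, e6] using hZ3
    · simpa [hV, e6] using hZ4
    · show L (Zvf p) 5 = V 5 + w • e6 5
      rw [show V 5 = (0:ℝ) from rfl, show e6 5 = (1:ℝ) from rfl, hw]
      simp
  have hcp : contactPlane (phiMap p) = Submodule.span ℝ {V, e6} := by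
    have : (![1, phiMap p 2, phiMap p 3, phiMap p 4, phiMap p 5, 0] : Fin 6 → ℝ) = V := by
      funext i
      fin_cases i <;> first
        | rfl
        | simp [phiMap, hV, h5succ]
    rw [contactPlane, this]
  rw [Submodule.map_span, Set.image_insert_eq, Set.image_singleton, ContinuousLinearMap.coe_coe, hLZ, hE, hcp]
  exact span_pair_shear V e6 w _ (mul_ne_zero (by norm_num) (zpow_ne_zero _ hp))
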